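/- Lower semicontinuity of eigenvalues: for every k ≥ 1, the k-th eigenvalue λ_k(Ω) = inf over k-dimensional subspaces K ⊂ H₀(Ω) of sup{∫|Du|²dm : u ∈ K, ∫u²dm = 1} is decreasing with respect to set inclusion and lower semicontinuous along weak-γ-convergent sequences of energy sets: Ω_n →_{wγ} Ω implies λ_k(Ω) ≤ liminf_n λ_k(Ω_n). -/

import Mathlib

open MeasureTheory Filter
open scoped ENNReal

namespace AbsSob

variable {X : Type*} [MeasurableSpace X]

/-- Abstract Sobolev setting: a Riesz subspace `H` of `L²(X,m)` with the Stone
property (H1)-(H2), together with a gradient-like map `D` satisfying (D1)-(D4). -/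
structure Setting (X : Type*) [MeasurableSpace X] (m : Measure X) where
  H : Set (X → ℝ)
  D : (X → ℝ) → X → ℝ
  zero_mem : (fun _ => (0 : ℝ)) ∈ H
  add_mem : ∀ ⦃u v : X → ℝ⦄, u ∈ H → v ∈ H → u + v ∈ H
  smul_mem : ∀ (c : ℝ) ⦃u : X → ℝ⦄, u ∈ H → c • u ∈ H
  sup_mem : ∀ ⦃u v : X → ℝ⦄, u ∈ H → v ∈ H → u ⊔ v ∈ H
  inf_mem : ∀ ⦃u v : X → ℝ⦄, u ∈ H → v ∈ H → u ⊓ v ∈ H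
  stone : ∀ ⦃u : X → ℝ⦄, u ∈ H → u ⊓ 1 ∈ H
  memL2 : ∀ ⦃u : X → ℝ⦄, u ∈ H → MemLp u 2 m
  gradL2 : ∀ ⦃u : X → ℝ⦄, u ∈ H → MemLp (D u) 2 m
  D1 : ∀ ⦃u : X → ℝ⦄, u ∈ H → ∀ᵐ x ∂m, 0 ≤ D u x
  D2 : ∀ ⦃u v : X → ℝ⦄, u ∈ H → v ∈ H → ∀ᵐ x ∂m, D (u + v) x ≤ D u x + D v x
  D3 : ∀ (c : ℝ) ⦃u : X → ℝ⦄, u ∈ H → ∀ᵐ x ∂m, D (c • u) x = |c| * D u x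
  D4 : ∀ ⦃u v : X → ℝ⦄, u ∈ H → v ∈ H → ∀ᵐ x ∂m,
      D (u ⊔ v) x = if v x < u x then D u x else D v x

variable {m : Measure X}

/-- Square of the `H`-norm: `‖u‖_H² = ‖u‖²_{L²} + ‖Du‖²_{L²}`. -/
noncomputable def normHsq (S : Setting X m) (u : X → ℝ) : ℝ :=
  ∫ x, (u x) ^ 2 ∂m + ∫ x, (S.D u x) ^ 2 ∂m

/-- Sobolev functions vanishing (m-a.e.) outside `Ω`. -/
def H0 (S : Setting X m) (Ω : Set X) : Set (X → ℝ) :=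
  {u | u ∈ S.H ∧ ∀ᵐ x ∂m, x ∉ Ω → u x = 0}

/-- The functional `F^{a,f}(u) = ½∫|Du|² + (a/2)∫u² − ∫ f u`. -/
noncomputable def F (S : Setting X m) (a : ℝ) (f : X → ℝ) (u : X → ℝ) : ℝ :=
  (1 / 2) * ∫ x, (S.D u x) ^ 2 ∂m + (a / 2) * ∫ x, (u x) ^ 2 ∂m - ∫ x, f x * u x ∂m

/-- `w` is a minimizer of `F^{a,f}` over `H₀(Ω)`. -/
def IsMinimizer (S : Setting X m) (Ω : Set X) (a : ℝ) (f : X → ℝ) (w : X → ℝ) : Prop :=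
  w ∈ H0 S Ω ∧ ∀ u ∈ H0 S Ω, F S a f w ≤ F S a f u

/-- (ℋ2): the inclusion `H ↪ L²` is compact. -/
def CompactEmbedding (S : Setting X m) : Prop :=
  ∀ u : ℕ → X → ℝ, (∀ n, u n ∈ S.H) → (∃ C : ℝ, ∀ n, normHsq S (u n) ≤ C) →
    ∃ (φ : ℕ → ℕ) (v : X → ℝ), StrictMono φ ∧ v ∈ S.H ∧
      Tendsto (fun k => ∫ x, (u (φ k) x - v x) ^ 2 ∂m) atTop (nhds 0)

/-- (ℋ3): lower semicontinuity of the gradient energy along `L²`-convergent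
`H`-bounded sequences, whose limit moreover belongs to `H`. -/
def GradLSC (S : Setting X m) : Prop :=
  ∀ (u : ℕ → X → ℝ) (v : X → ℝ), (∀ n, u n ∈ S.H) →
    (∃ C : ℝ, ∀ n, normHsq S (u n) ≤ C) →
    Tendsto (fun n => ∫ x, (u n x - v x) ^ 2 ∂m) atTop (nhds 0) →
    v ∈ S.H ∧ ∫ x, (S.D v x) ^ 2 ∂m ≤ liminf (fun n => ∫ x, (S.D (u n) x) ^ 2 ∂m) atTop

/-- Energy sets: Borel sets coinciding up to an `m`-null set with `{w_Ω > 0}`. -/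
def IsEnergySet (S : Setting X m) (Ω : Set X) : Prop :=
  MeasurableSet Ω ∧ ∃ w, IsMinimizer S Ω 1 (fun _ => 1) w ∧ m (Ω \ {x | 0 < w x}) = 0


/-- The `k`-th eigenvalue via the min-max over `k`-dimensional subspaces of `H₀(Ω)`. -/
noncomputable def lambdaK (S : Setting X m) (Ω : Set X) (k : ℕ) : ℝ≥0∞ :=
  sInf {r : ℝ≥0∞ | ∃ b : Fin k → X → ℝ, (∀ i, b i ∈ H0 S Ω) ∧ LinearIndependent ℝ b ∧
    r = sSup {s : ℝ≥0∞ | ∃ c : Fin k → ℝ,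
      (∫ x, (∑ i, c i * b i x) ^ 2 ∂m) = 1 ∧
      s = ENNReal.ofReal (∫ x, (S.D (fun y => ∑ i, c i * b i y) x) ^ 2 ∂m)}}


section Helpers
variable {X : Type*} [MeasurableSpace X] {m : Measure X}

theorem intg_mul {f g : X → ℝ} (hf : MemLp f 2 m) (hg : MemLp g 2 m) :
    Integrable (fun x => f x * g x) m := by
  refine Integrable.mono' ((hf.integrable_sq.add hg.integrable_sq).div_const 2) (hf.1.mul hg.1) ?_
  filter_upwards with x
  simp only [Pi.add_apply, Real.norm_eq_abs, abs_mul]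
  nlinarith [sq_nonneg (|f x| - |g x|), sq_abs (f x), sq_abs (g x), abs_nonneg (f x),
    abs_nonneg (g x)]

theorem intg [IsFiniteMeasure m] {f : X → ℝ} (hf : MemLp f 2 m) : Integrable f m :=
  memLp_one_iff_integrable.mp (hf.mono_exponent (by norm_num))

variable {S : Setting X m}

theorem memH_sub {u v : X → ℝ} (hu : u ∈ S.H) (hv : v ∈ S.H) : u - v ∈ S.H := by
  have h : u - v = u + (-1 : ℝ) • v := by funext y; simp [Pi.sub_apply]; ring
  rw [h]; exact S.add_mem hu (S.smul_mem _ hv)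

theorem memH_neg {u : X → ℝ} (hu : u ∈ S.H) : -u ∈ S.H := by
  have h : -u = (-1 : ℝ) • u := by funext y; simp
  rw [h]; exact S.smul_mem _ hu

theorem lc_mem {k : ℕ} {b : Fin k → X → ℝ} (hb : ∀ i, b i ∈ S.H) (c : Fin k → ℝ) :
    (fun y => ∑ i, c i * b i y) ∈ S.H := by
  classical
  have key : ∀ s : Finset (Fin k), (fun y => ∑ i ∈ s, c i * b i y) ∈ S.H := by
    intro s
    induction s using Finset.induction_on with
    | empty => simpa using S.zero_mem
    | @insert a s ha ih =>
      have h : (fun y => ∑ i ∈ insert a s, c i * b i y)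
          = c a • b a + fun y => ∑ i ∈ s, c i * b i y := by
        funext y; simp [Finset.sum_insert ha]
      rw [h]; exact S.add_mem (S.smul_mem _ (hb a)) ih
  exact key Finset.univ

theorem D_zero_fn : S.D (fun _ => (0 : ℝ)) =ᵐ[m] fun _ => (0 : ℝ) := by
  have h00 : ((0 : ℝ) • (fun _ => (0 : ℝ)) : X → ℝ) = fun _ => (0 : ℝ) := by funext y; simp
  filter_upwards [S.D3 0 S.zero_mem] with x hx
  rw [h00] at hx; simpa using hx

theorem D_ae_zero {u : X → ℝ} (hu : u ∈ S.H) (h0 : u =ᵐ[m] fun _ => (0 : ℝ)) :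
    S.D u =ᵐ[m] fun _ => (0 : ℝ) := by
  have hz : (fun _ => (0 : ℝ)) ∈ S.H := S.zero_mem
  have hsup : ∀ v : X → ℝ, v ∈ S.H → v =ᵐ[m] (fun _ => (0 : ℝ)) →
      S.D (v ⊔ fun _ => (0 : ℝ)) =ᵐ[m] fun _ => (0 : ℝ) := by
    intro v hv hv0
    filter_upwards [S.D4 hv hz, hv0, D_zero_fn (S := S)] with x h4 hx hdz
    rw [h4, hx]; simpa using hdz
  set p : X → ℝ := u ⊔ fun _ => (0 : ℝ) with hp
  set q : X → ℝ := ((-1 : ℝ) • u) ⊔ fun _ => (0 : ℝ) with hq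
  have hpH : p ∈ S.H := S.sup_mem hu hz
  have hqH : q ∈ S.H := S.sup_mem (S.smul_mem _ hu) hz
  have hrepr : u = p + (-1 : ℝ) • q := by
    funext y
    simp only [hp, hq, Pi.add_apply, Pi.smul_apply, Pi.sup_apply, Pi.smul_apply,
      smul_eq_mul]
    rcases le_total (u y) 0 with h | h
    · rw [max_eq_right h, max_eq_left (by linarith)]; ring
    · rw [max_eq_left h, max_eq_right (by linarith)]; ring
  have hDp : S.D p =ᵐ[m] fun _ => (0 : ℝ) := hsup u hu h0
  have hDq : S.D q =ᵐ[m] fun _ => (0 : ℝ) := by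
    refine hsup _ (S.smul_mem _ hu) ?_
    filter_upwards [h0] with x hx
    simp [hx]
  have hle : ∀ᵐ x ∂m, S.D u x ≤ 0 := by
    filter_upwards [S.D2 hpH (S.smul_mem (-1) hqH), S.D3 (-1) hqH, hDp, hDq] with x h2 h3 hp0 hq0
    rw [← hrepr] at h2
    rw [h3] at h2
    simp only [hp0, hq0] at h2 ⊢
    simpa using h2
  filter_upwards [hle, S.D1 hu] with x h1 h2
  exact le_antisymm h1 h2

theorem D_congr_ae {u v : X → ℝ} (hu : u ∈ S.H) (hv : v ∈ S.H) (h : u =ᵐ[m] v) :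
    S.D u =ᵐ[m] S.D v := by
  have key : ∀ a b : X → ℝ, a ∈ S.H → b ∈ S.H → a =ᵐ[m] b →
      ∀ᵐ x ∂m, S.D b x ≤ S.D a x := by
    intro a b ha hb hab
    have hd : b - a ∈ S.H := memH_sub hb ha
    have hd0 : b - a =ᵐ[m] fun _ => (0 : ℝ) := by
      filter_upwards [hab] with x hx; simp [Pi.sub_apply, hx]
    have hrepr : b = a + (b - a) := by funext y; simp
    filter_upwards [S.D2 ha hd, D_ae_zero hd hd0] with x h2 h0
    rw [← hrepr] at h2
    simpa [h0] using h2
  filter_upwards [key u v hu hv h, key v u hv hu h.symm] with x h1 h2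
  exact le_antisymm h2 h1

end Helpers

section Helpers2
variable {X : Type*} [MeasurableSpace X] {m : Measure X}

theorem ae_zero_of_sq_integral_zero {f : X → ℝ} (hf : MemLp f 2 m)
    (h : ∫ x, (f x) ^ 2 ∂m = 0) : f =ᵐ[m] fun _ => (0 : ℝ) := by
  have h0 : (fun x => (f x) ^ 2) =ᵐ[m] 0 := by
    rw [← integral_eq_zero_iff_of_nonneg (fun x => sq_nonneg (f x)) hf.integrable_sq]
    exact h
  filter_upwards [h0] with x hx
  have : (f x) ^ 2 = 0 := hx
  simpa using pow_eq_zero_iff (n := 2) (by norm_num) |>.mp this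

/-- If `∫ fₙ² → 0` and `∫ gₙ² ≤ M` then `∫ |fₙ||gₙ| → 0`. -/
theorem tendsto_int_absmul {f g : ℕ → X → ℝ} {M : ℝ}
    (hf : ∀ n, MemLp (f n) 2 m) (hg : ∀ n, MemLp (g n) 2 m)
    (hM : ∀ n, ∫ x, (g n x) ^ 2 ∂m ≤ M)
    (h : Tendsto (fun n => ∫ x, (f n x) ^ 2 ∂m) atTop (nhds 0)) :
    Tendsto (fun n => ∫ x, |f n x| * |g n x| ∂m) atTop (nhds 0) := by
  have hM0 : 0 ≤ M := le_trans (integral_nonneg fun x => sq_nonneg _) (hM 0)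
  have hint : ∀ n, Integrable (fun x => |f n x| * |g n x|) m := fun n =>
    intg_mul ((hf n).norm) ((hg n).norm)
  have hkey : ∀ T : ℝ, 0 < T → ∀ n,
      ∫ x, |f n x| * |g n x| ∂m ≤ T / 2 * ∫ x, (f n x) ^ 2 ∂m + M / (2 * T) := by
    intro T hT n
    have hb : ∀ x, |f n x| * |g n x| ≤ T / 2 * (f n x) ^ 2 + 1 / (2 * T) * (g n x) ^ 2 := by
      intro x
      have h2T : (0:ℝ) < 2 * T := by positivity
      have hkey2 : 2 * T * (|f n x| * |g n x|) ≤ T ^ 2 * (f n x) ^ 2 + (g n x) ^ 2 := by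
        nlinarith [sq_nonneg (T * |f n x| - |g n x|), sq_abs (f n x), sq_abs (g n x)]
      have hrw : T / 2 * (f n x) ^ 2 + 1 / (2 * T) * (g n x) ^ 2
          = (T ^ 2 * (f n x) ^ 2 + (g n x) ^ 2) / (2 * T) := by field_simp
      rw [hrw, le_div_iff₀ h2T]; linarith
    have hA : Integrable (fun x => T / 2 * (f n x) ^ 2) m :=
      ((hf n).integrable_sq).const_mul (T / 2)
    have hB : Integrable (fun x => 1 / (2 * T) * (g n x) ^ 2) m :=
      ((hg n).integrable_sq).const_mul (1 / (2 * T))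
    have hstep : ∫ x, |f n x| * |g n x| ∂m
        ≤ ∫ x, (T / 2 * (f n x) ^ 2 + 1 / (2 * T) * (g n x) ^ 2) ∂m :=
      integral_mono (hint n) (hA.add hB) hb
    rw [integral_add hA hB, integral_const_mul, integral_const_mul] at hstep
    have h2 : 1 / (2 * T) * ∫ x, (g n x) ^ 2 ∂m ≤ M / (2 * T) := by
      have hpos : (0:ℝ) < 2 * T := by positivity
      rw [div_eq_mul_inv M, mul_comm M, one_div]
      exact mul_le_mul_of_nonneg_left (hM n) (by positivity)
    linarith
  rw [Metric.tendsto_atTop] at h ⊢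
  intro ε hε
  set T : ℝ := M / ε + 1 with hTdef
  have hT : 0 < T := by positivity
  have hMT : M / (2 * T) < ε / 2 := by
    rw [div_lt_iff₀ (by positivity)]
    have hεT : ε * T = M + ε := by
      rw [hTdef]; field_simp
    calc M < ε * T := by rw [hεT]; linarith
      _ = ε / 2 * (2 * T) := by ring
  obtain ⟨N, hN⟩ := h (ε / (2 * T)) (by positivity)
  refine ⟨N, fun n hn => ?_⟩
  have h1 := hN n hn
  rw [Real.dist_eq] at h1 ⊢
  have hfn0 : 0 ≤ ∫ x, (f n x) ^ 2 ∂m := integral_nonneg fun x => sq_nonneg _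
  have hfn : ∫ x, (f n x) ^ 2 ∂m < ε / (2 * T) := by
    rw [abs_of_nonneg (by simpa using hfn0)] at h1; simpa using h1
  have hnn : 0 ≤ ∫ x, |f n x| * |g n x| ∂m :=
    integral_nonneg fun x => mul_nonneg (abs_nonneg _) (abs_nonneg _)
  rw [sub_zero, abs_of_nonneg hnn]
  calc ∫ x, |f n x| * |g n x| ∂m ≤ T / 2 * ∫ x, (f n x) ^ 2 ∂m + M / (2 * T) :=
        hkey T hT n
    _ < T / 2 * (ε / (2 * T)) + ε / 2 := by
        have : T / 2 * ∫ x, (f n x) ^ 2 ∂m ≤ T / 2 * (ε / (2 * T)) := by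
          apply mul_le_mul_of_nonneg_left (le_of_lt hfn) (by positivity)
        linarith
    _ ≤ ε / 4 + ε / 2 := by
        have : T / 2 * (ε / (2 * T)) = ε / 4 := by field_simp; ring
        linarith [this.le]
    _ < ε := by linarith

theorem tendsto_int_abs [IsFiniteMeasure m] {f : ℕ → X → ℝ}
    (hf : ∀ n, MemLp (f n) 2 m)
    (h : Tendsto (fun n => ∫ x, (f n x) ^ 2 ∂m) atTop (nhds 0)) :
    Tendsto (fun n => ∫ x, |f n x| ∂m) atTop (nhds 0) := by
  have := tendsto_int_absmul (g := fun _ => fun _ => (1 : ℝ)) (M := (m Set.univ).toReal)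
    hf (fun n => memLp_const 1) (fun n => by simp [Measure.real]) h
  simpa using this

/-- `∫ fₙgₙ → 0` when both `∫ fₙ² → 0` and `∫ gₙ² → 0`. -/
theorem tendsto_int_mul_zero {f g : ℕ → X → ℝ}
    (hf : ∀ n, MemLp (f n) 2 m) (hg : ∀ n, MemLp (g n) 2 m)
    (h1 : Tendsto (fun n => ∫ x, (f n x) ^ 2 ∂m) atTop (nhds 0))
    (h2 : Tendsto (fun n => ∫ x, (g n x) ^ 2 ∂m) atTop (nhds 0)) :
    Tendsto (fun n => ∫ x, f n x * g n x ∂m) atTop (nhds 0) := by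
  apply squeeze_zero_norm (a := fun n => (1:ℝ)/2 * ∫ x, (f n x) ^ 2 ∂m
    + (1:ℝ)/2 * ∫ x, (g n x) ^ 2 ∂m)
  · intro n
    have hb : ∀ x, |f n x| * |g n x| ≤ 1/2 * (f n x) ^ 2 + 1/2 * (g n x) ^ 2 := by
      intro x
      nlinarith [sq_nonneg (|f n x| - |g n x|), sq_abs (f n x), sq_abs (g n x),
        abs_nonneg (f n x), abs_nonneg (g n x)]
    calc ‖∫ x, f n x * g n x ∂m‖ ≤ ∫ x, |f n x| * |g n x| ∂m := by
          simpa [Real.norm_eq_abs, abs_mul] using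
            norm_integral_le_integral_norm (fun x => f n x * g n x) (μ := m)
      _ ≤ ∫ x, (1/2 * (f n x) ^ 2 + 1/2 * (g n x) ^ 2) ∂m := by
          have hA : Integrable (fun x => 1/2 * (f n x) ^ 2) m :=
            ((hf n).integrable_sq).const_mul _
          have hB : Integrable (fun x => 1/2 * (g n x) ^ 2) m :=
            ((hg n).integrable_sq).const_mul _
          exact integral_mono (intg_mul ((hf n).norm) ((hg n).norm)) (hA.add hB) hb
      _ = 1/2 * ∫ x, (f n x) ^ 2 ∂m + 1/2 * ∫ x, (g n x) ^ 2 ∂m := by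
          have hA : Integrable (fun x => 1/2 * (f n x) ^ 2) m :=
            ((hf n).integrable_sq).const_mul _
          have hB : Integrable (fun x => 1/2 * (g n x) ^ 2) m :=
            ((hg n).integrable_sq).const_mul _
          rw [integral_add hA hB, integral_const_mul, integral_const_mul]
  · have := (h1.const_mul ((1:ℝ)/2)).add (h2.const_mul ((1:ℝ)/2))
    simpa using this

/-- convergence of inner products. -/
theorem tendsto_int_mul {f g : ℕ → X → ℝ} {f0 g0 : X → ℝ} {M : ℝ}
    (hf : ∀ n, MemLp (f n) 2 m) (hg : ∀ n, MemLp (g n) 2 m)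
    (hf0 : MemLp f0 2 m) (hg0 : MemLp g0 2 m)
    (hM : ∀ n, ∫ x, (g n x) ^ 2 ∂m ≤ M)
    (h1 : Tendsto (fun n => ∫ x, (f n x - f0 x) ^ 2 ∂m) atTop (nhds 0))
    (h2 : Tendsto (fun n => ∫ x, (g n x - g0 x) ^ 2 ∂m) atTop (nhds 0)) :
    Tendsto (fun n => ∫ x, f n x * g n x ∂m) atTop (nhds (∫ x, f0 x * g0 x ∂m)) := by
  have key : Tendsto (fun n => ∫ x, f n x * g n x ∂m - ∫ x, f0 x * g0 x ∂m) atTop (nhds 0) := by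
    have t1 : Tendsto (fun n => ∫ x, |f n x - f0 x| * |g n x| ∂m) atTop (nhds 0) :=
      tendsto_int_absmul (fun n => (hf n).sub hf0) hg hM h1
    have t2 : Tendsto (fun n => ∫ x, |f0 x| * |g n x - g0 x| ∂m) atTop (nhds 0) := by
      have := tendsto_int_absmul (f := fun n => fun x => g n x - g0 x)
        (g := fun _ => f0) (M := ∫ x, (f0 x) ^ 2 ∂m)
        (fun n => (hg n).sub hg0) (fun _ => hf0) (fun _ => le_rfl) h2
      have hcomm : ∀ n, (∫ x, |g n x - g0 x| * |f0 x| ∂m)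
          = ∫ x, |f0 x| * |g n x - g0 x| ∂m := by
        intro n; congr 1; funext x; ring
      simpa [hcomm] using this
    apply squeeze_zero_norm (a := fun n => (∫ x, |f n x - f0 x| * |g n x| ∂m)
      + ∫ x, |f0 x| * |g n x - g0 x| ∂m)
    · intro n
      have hd1 : Integrable (fun x => (f n x - f0 x) * g n x) m :=
        intg_mul ((hf n).sub hf0) (hg n)
      have hd2 : Integrable (fun x => f0 x * (g n x - g0 x)) m :=
        intg_mul hf0 ((hg n).sub hg0)
      have hi : ∫ x, f n x * g n x ∂m - ∫ x, f0 x * g0 x ∂m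
          = (∫ x, (f n x - f0 x) * g n x ∂m) + ∫ x, f0 x * (g n x - g0 x) ∂m := by
        rw [← integral_add hd1 hd2, ← integral_sub (intg_mul (hf n) (hg n))
          (intg_mul hf0 hg0)]
        congr 1; funext x; ring
      have e1 : |∫ x, (f n x - f0 x) * g n x ∂m| ≤ ∫ x, |f n x - f0 x| * |g n x| ∂m := by
        simpa [Real.norm_eq_abs, abs_mul] using
          norm_integral_le_integral_norm (fun x => (f n x - f0 x) * g n x) (μ := m)
      have e2 : |∫ x, f0 x * (g n x - g0 x) ∂m| ≤ ∫ x, |f0 x| * |g n x - g0 x| ∂m := by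
        simpa [Real.norm_eq_abs, abs_mul] using
          norm_integral_le_integral_norm (fun x => f0 x * (g n x - g0 x)) (μ := m)
      rw [hi, Real.norm_eq_abs]
      calc |(∫ x, (f n x - f0 x) * g n x ∂m) + ∫ x, f0 x * (g n x - g0 x) ∂m|
          ≤ |∫ x, (f n x - f0 x) * g n x ∂m| + |∫ x, f0 x * (g n x - g0 x) ∂m| :=
            abs_add_le _ _
        _ ≤ (∫ x, |f n x - f0 x| * |g n x| ∂m) + ∫ x, |f0 x| * |g n x - g0 x| ∂m :=
            add_le_add e1 e2
    · simpa using t1.add t2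
  have h3 := key.add_const (∫ x, f0 x * g0 x ∂m)
  simp only [sub_add_cancel, zero_add] at h3
  exact h3

end Helpers2

section Helpers3
variable {X : Type*} [MeasurableSpace X] {m : Measure X}

theorem integral_lc_sq {k : ℕ} {b : Fin k → X → ℝ} (hb : ∀ i, MemLp (b i) 2 m)
    (c : Fin k → ℝ) :
    ∫ x, (∑ i, c i * b i x) ^ 2 ∂m = ∑ i, ∑ l, c i * c l * ∫ x, b i x * b l x ∂m := by
  have hint : ∀ i l : Fin k, Integrable (fun x => c i * c l * (b i x * b l x)) m :=
    fun i l => (intg_mul (hb i) (hb l)).const_mul _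
  calc ∫ x, (∑ i, c i * b i x) ^ 2 ∂m
      = ∫ x, ∑ i, ∑ l, c i * c l * (b i x * b l x) ∂m := by
        congr 1; funext x
        rw [sq, Finset.sum_mul_sum]
        refine Finset.sum_congr rfl fun i _ => Finset.sum_congr rfl fun l _ => by ring
    _ = ∑ i, ∫ x, ∑ l, c i * c l * (b i x * b l x) ∂m := by
        exact integral_finset_sum _ fun i _ => integrable_finset_sum _ fun l _ => hint i l
    _ = ∑ i, ∑ l, ∫ x, c i * c l * (b i x * b l x) ∂m := by
        refine Finset.sum_congr rfl fun i _ => ?_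
        exact integral_finset_sum _ fun l _ => hint i l
    _ = ∑ i, ∑ l, c i * c l * ∫ x, b i x * b l x ∂m := by
        refine Finset.sum_congr rfl fun i _ => Finset.sum_congr rfl fun l _ => ?_
        exact integral_const_mul _ _

theorem sum_mul_orth {k : ℕ} {c : Fin k → ℝ} {G : Fin k → Fin k → ℝ}
    (hoff : ∀ i l, i ≠ l → c i ≠ 0 → c l ≠ 0 → G i l = 0)
    (hdiag : ∀ i, c i ≠ 0 → G i i = 1) :
    ∑ i, ∑ l, c i * c l * G i l = ∑ i, (c i) ^ 2 := by
  classical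
  refine Finset.sum_congr rfl fun i _ => ?_
  by_cases hci : c i = 0
  · simp [hci]
  · rw [Finset.sum_eq_single i]
    · rw [hdiag i hci]; ring
    · intro l _ hl
      by_cases hcl : c l = 0
      · simp [hcl]
      · rw [hoff i l (Ne.symm hl) hci hcl]; ring
    · intro h; exact absurd (Finset.mem_univ i) h

variable {S : Setting X m}

theorem lc_H0 {Ω : Set X} {k : ℕ} {b : Fin k → X → ℝ} (hb : ∀ i, b i ∈ H0 S Ω)
    (c : Fin k → ℝ) : (fun y => ∑ i, c i * b i y) ∈ H0 S Ω := by
  refine ⟨lc_mem (fun i => (hb i).1) c, ?_⟩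
  have h := ae_all_iff.mpr (fun i => (hb i).2)
  filter_upwards [h] with x hx hΩ
  exact Finset.sum_eq_zero fun i _ => by rw [hx i hΩ, mul_zero]

theorem normHsq_nonneg (u : X → ℝ) : 0 ≤ normHsq S u :=
  add_nonneg (integral_nonneg fun x => sq_nonneg _) (integral_nonneg fun x => sq_nonneg _)

/-- Key lemma: limits of `H`-bounded sequences supported in `Ωₙ` vanish where the
limit of the torsion-like minimizers is nonpositive. -/
theorem vanish_limit [IsFiniteMeasure m]
    {Ωn : ℕ → Set X} {wn : ℕ → X → ℝ}
    (hmin : ∀ n, IsMinimizer S (Ωn n) 1 (fun _ => 1) (wn n))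
    {w : X → ℝ} (hw : MemLp w 2 m)
    (hwc : Tendsto (fun n => ∫ x, (wn n x - w x) ^ 2 ∂m) atTop (nhds 0))
    {un : ℕ → X → ℝ} (hun : ∀ n, un n ∈ H0 S (Ωn n))
    {C : ℝ} (hC : ∀ n, normHsq S (un n) ≤ C)
    {v : X → ℝ} (hv : MemLp v 2 m)
    (hvc : Tendsto (fun n => ∫ x, (un n x - v x) ^ 2 ∂m) atTop (nhds 0)) :
    ∀ᵐ x ∂m, w x ≤ 0 → v x ≤ 0 := by
  have hC0 : 0 ≤ C := le_trans (normHsq_nonneg (un 0)) (hC 0)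
  -- Step A : per-n minimality inequality
  have stepA : ∀ t : ℝ, 0 < t → ∀ n,
      ∫ x, max (t⁻¹ * un n x - wn n x) 0 ∂m ≤ C / (2 * t ^ 2) := by
    intro t ht n
    obtain ⟨⟨hWH, hW0⟩, hFmin⟩ := hmin n
    obtain ⟨huH, hu0⟩ := hun n
    set v' : X → ℝ := t⁻¹ • un n with hv'def
    have hv'H : v' ∈ S.H := S.smul_mem t⁻¹ huH
    set g : X → ℝ := wn n ⊔ v' with hgdef
    have hgH : g ∈ S.H := S.sup_mem hWH hv'H
    have hgH0 : g ∈ H0 S (Ωn n) := by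
      refine ⟨hgH, ?_⟩
      filter_upwards [hW0, hu0] with x h1 h2 hx
      show max (wn n x) (t⁻¹ * un n x) = 0
      rw [h1 hx, h2 hx, mul_zero, max_self]
    have hF := hFmin g hgH0
    simp only [F, one_mul] at hF
    have iW : Integrable (wn n) m := intg (S.memL2 hWH)
    have ig : Integrable g m := intg (S.memL2 hgH)
    have iW2 : Integrable (fun x => (wn n x) ^ 2) m := (S.memL2 hWH).integrable_sq
    have ig2 : Integrable (fun x => (g x) ^ 2) m := (S.memL2 hgH).integrable_sq
    have iDW2 : Integrable (fun x => (S.D (wn n) x) ^ 2) m := (S.gradL2 hWH).integrable_sq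
    have iDg2 : Integrable (fun x => (S.D g x) ^ 2) m := (S.gradL2 hgH).integrable_sq
    have iv'2 : Integrable (fun x => (v' x) ^ 2) m := (S.memL2 hv'H).integrable_sq
    have iDv'2 : Integrable (fun x => (S.D v' x) ^ 2) m := (S.gradL2 hv'H).integrable_sq
    have e1 : ∫ x, (S.D g x) ^ 2 ∂m ≤ (∫ x, (S.D (wn n) x) ^ 2 ∂m) + ∫ x, (S.D v' x) ^ 2 ∂m := by
      have hae : ∀ᵐ x ∂m, (S.D g x) ^ 2 ≤ (S.D (wn n) x) ^ 2 + (S.D v' x) ^ 2 := by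
        filter_upwards [S.D4 hWH hv'H] with x hx
        rw [hgdef, hx]
        split_ifs <;> nlinarith [sq_nonneg (S.D (wn n) x), sq_nonneg (S.D v' x)]
      have e1' : ∫ x, (S.D g x) ^ 2 ∂m ≤ ∫ x, ((S.D (wn n) x) ^ 2 + (S.D v' x) ^ 2) ∂m :=
        integral_mono_ae iDg2 (iDW2.add iDv'2) hae
      rwa [integral_add iDW2 iDv'2] at e1' 
    have e2 : ∫ x, (g x) ^ 2 ∂m ≤ (∫ x, (wn n x) ^ 2 ∂m) + ∫ x, (v' x) ^ 2 ∂m := by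
      have hpt : ∀ x, (g x) ^ 2 ≤ (wn n x) ^ 2 + (v' x) ^ 2 := by
        intro x
        show (max (wn n x) (v' x)) ^ 2 ≤ _
        rcases le_total (wn n x) (v' x) with h | h
        · rw [max_eq_right h]; nlinarith [sq_nonneg (wn n x)]
        · rw [max_eq_left h]; nlinarith [sq_nonneg (v' x)]
      have e2' : ∫ x, (g x) ^ 2 ∂m ≤ ∫ x, ((wn n x) ^ 2 + (v' x) ^ 2) ∂m :=
        integral_mono ig2 (iW2.add iv'2) hpt
      rwa [integral_add iW2 iv'2] at e2' 
    have e3 : ∫ x, (g x - wn n x) ∂m = ∫ x, max (t⁻¹ * un n x - wn n x) 0 ∂m := by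
      congr 1; funext x
      show max (wn n x) (t⁻¹ * un n x) - wn n x = max (t⁻¹ * un n x - wn n x) 0
      rcases le_total (t⁻¹ * un n x) (wn n x) with h | h
      · rw [max_eq_left h, max_eq_right (by linarith)]; ring
      · rw [max_eq_right h, max_eq_left (by linarith)]
    have e4 : ∫ x, (g x - wn n x) ∂m = (∫ x, g x ∂m) - ∫ x, wn n x ∂m := integral_sub ig iW
    have e5 : ∫ x, (S.D v' x) ^ 2 ∂m = t⁻¹ ^ 2 * ∫ x, (S.D (un n) x) ^ 2 ∂m := by
      have h3 := S.D3 t⁻¹ huH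
      have : ∫ x, (S.D v' x) ^ 2 ∂m = ∫ x, (t⁻¹ * S.D (un n) x) ^ 2 ∂m := by
        refine integral_congr_ae ?_
        filter_upwards [h3] with x hx
        rw [hv'def, hx, abs_of_nonneg (le_of_lt (inv_pos.mpr ht))]
      rw [this]
      simp_rw [mul_pow]
      exact integral_const_mul _ _
    have e6 : ∫ x, (v' x) ^ 2 ∂m = t⁻¹ ^ 2 * ∫ x, (un n x) ^ 2 ∂m := by
      have : ∫ x, (v' x) ^ 2 ∂m = ∫ x, (t⁻¹ * un n x) ^ 2 ∂m := rfl
      rw [this]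
      simp_rw [mul_pow]
      exact integral_const_mul _ _
    have key : ∫ x, max (t⁻¹ * un n x - wn n x) 0 ∂m
        ≤ 1 / 2 * ∫ x, (S.D v' x) ^ 2 ∂m + 1 / 2 * ∫ x, (v' x) ^ 2 ∂m := by
      rw [← e3, e4]; linarith
    have hnorm : ∫ x, (S.D (un n) x) ^ 2 ∂m + ∫ x, (un n x) ^ 2 ∂m ≤ C := by
      have := hC n; rw [normHsq] at this; linarith
    have ht2 : (0:ℝ) < t ^ 2 := by positivity
    calc ∫ x, max (t⁻¹ * un n x - wn n x) 0 ∂m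
        ≤ 1 / 2 * (t⁻¹ ^ 2 * ∫ x, (S.D (un n) x) ^ 2 ∂m)
          + 1 / 2 * (t⁻¹ ^ 2 * ∫ x, (un n x) ^ 2 ∂m) := by rw [← e5, ← e6]; exact key
      _ = t⁻¹ ^ 2 / 2 * (∫ x, (S.D (un n) x) ^ 2 ∂m + ∫ x, (un n x) ^ 2 ∂m) := by ring
      _ ≤ t⁻¹ ^ 2 / 2 * C := by
          apply mul_le_mul_of_nonneg_left hnorm (by positivity)
      _ = C / (2 * t ^ 2) := by
          have h : (t:ℝ) ^ 2 ≠ 0 := by positivity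
          rw [eq_div_iff (by positivity : (2 * t ^ 2 : ℝ) ≠ 0), inv_pow]
          calc (t ^ 2)⁻¹ / 2 * C * (2 * t ^ 2) = (t ^ 2 * (t ^ 2)⁻¹) * C := by ring
            _ = C := by rw [mul_inv_cancel₀ h, one_mul]
  -- Step B : pass to the limit in n
  have stepB : ∀ t : ℝ, 0 < t →
      ∫ x, max (t⁻¹ * v x - w x) 0 ∂m ≤ C / (2 * t ^ 2) := by
    intro t ht
    have hint : ∀ n, Integrable (fun x => max (t⁻¹ * un n x - wn n x) 0) m := by
      intro n
      exact (((intg (S.memL2 (hun n).1)).const_mul t⁻¹).sub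
        (intg (S.memL2 ((hmin n).1.1)))).pos_part
    have hint0 : Integrable (fun x => max (t⁻¹ * v x - w x) 0) m :=
      (((intg hv).const_mul t⁻¹).sub (intg hw)).pos_part
    have habs1 : Tendsto (fun n => ∫ x, |un n x - v x| ∂m) atTop (nhds 0) :=
      tendsto_int_abs (fun n => (S.memL2 (hun n).1).sub hv) hvc
    have habs2 : Tendsto (fun n => ∫ x, |wn n x - w x| ∂m) atTop (nhds 0) :=
      tendsto_int_abs (fun n => (S.memL2 ((hmin n).1.1)).sub hw) hwc
    have hconv : Tendsto (fun n => ∫ x, max (t⁻¹ * un n x - wn n x) 0 ∂m)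
        atTop (nhds (∫ x, max (t⁻¹ * v x - w x) 0 ∂m)) := by
      have hdiff : Tendsto (fun n => (∫ x, max (t⁻¹ * un n x - wn n x) 0 ∂m)
          - ∫ x, max (t⁻¹ * v x - w x) 0 ∂m) atTop (nhds 0) := by
        apply squeeze_zero_norm
          (a := fun n => t⁻¹ * (∫ x, |un n x - v x| ∂m) + ∫ x, |wn n x - w x| ∂m)
        · intro n
          have hiabs1 : Integrable (fun x => |un n x - v x|) m :=
            (intg ((S.memL2 (hun n).1).sub hv)).abs
          have hiabs2 : Integrable (fun x => |wn n x - w x|) m :=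
            (intg ((S.memL2 ((hmin n).1.1)).sub hw)).abs
          have hptb : ∀ x, |max (t⁻¹ * un n x - wn n x) 0 - max (t⁻¹ * v x - w x) 0|
              ≤ t⁻¹ * |un n x - v x| + |wn n x - w x| := by
            intro x
            have h1 : |max (t⁻¹ * un n x - wn n x) 0 - max (t⁻¹ * v x - w x) 0|
                ≤ |(t⁻¹ * un n x - wn n x) - (t⁻¹ * v x - w x)| :=
              abs_max_sub_max_le_abs _ _ _
            have h2 : (t⁻¹ * un n x - wn n x) - (t⁻¹ * v x - w x)
                = t⁻¹ * (un n x - v x) - (wn n x - w x) := by ring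
            calc |max (t⁻¹ * un n x - wn n x) 0 - max (t⁻¹ * v x - w x) 0|
                ≤ |t⁻¹ * (un n x - v x) - (wn n x - w x)| := by rw [← h2]; exact h1
              _ ≤ |t⁻¹ * (un n x - v x)| + |wn n x - w x| := abs_sub _ _
              _ = t⁻¹ * |un n x - v x| + |wn n x - w x| := by
                  rw [abs_mul, abs_of_nonneg (le_of_lt (inv_pos.mpr ht))]
          calc ‖(∫ x, max (t⁻¹ * un n x - wn n x) 0 ∂m) - ∫ x, max (t⁻¹ * v x - w x) 0 ∂m‖
              = |∫ x, (max (t⁻¹ * un n x - wn n x) 0 - max (t⁻¹ * v x - w x) 0) ∂m| := by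
                rw [integral_sub (hint n) hint0, Real.norm_eq_abs]
            _ ≤ ∫ x, |max (t⁻¹ * un n x - wn n x) 0 - max (t⁻¹ * v x - w x) 0| ∂m := by
                simpa [Real.norm_eq_abs] using norm_integral_le_integral_norm
                  (fun x => max (t⁻¹ * un n x - wn n x) 0 - max (t⁻¹ * v x - w x) 0) (μ := m)
            _ ≤ ∫ x, (t⁻¹ * |un n x - v x| + |wn n x - w x|) ∂m := by
                exact integral_mono (((hint n).sub hint0).abs)
                  ((hiabs1.const_mul t⁻¹).add hiabs2) hptb
            _ = t⁻¹ * (∫ x, |un n x - v x| ∂m) + ∫ x, |wn n x - w x| ∂m := by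
                rw [integral_add (hiabs1.const_mul t⁻¹) hiabs2, integral_const_mul]
        · simpa using (habs1.const_mul t⁻¹).add habs2
      have := hdiff.add_const (∫ x, max (t⁻¹ * v x - w x) 0 ∂m)
      simp only [sub_add_cancel, zero_add] at this
      exact this
    exact le_of_tendsto hconv (Filter.Eventually.of_forall fun n => stepA t ht n)
  -- Step C : conclude via measurable representatives
  obtain ⟨hwm, hww'⟩ := And.intro (hw.1.stronglyMeasurable_mk) (hw.1.ae_eq_mk)
  obtain ⟨hvm, hvv'⟩ := And.intro (hv.1.stronglyMeasurable_mk) (hv.1.ae_eq_mk)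
  set w' := hw.1.mk w
  set v' := hv.1.mk v
  set E : Set X := {x | w' x ≤ 0} with hEdef
  have hE : MeasurableSet E := measurableSet_le hwm.measurable measurable_const
  set G : X → ℝ := E.indicator (fun x => max (v' x) 0) with hGdef
  have hGnn : ∀ x, 0 ≤ G x := by
    intro x
    rw [hGdef]
    by_cases hx : x ∈ E
    · rw [Set.indicator_of_mem hx]; exact le_max_right _ _
    · rw [Set.indicator_of_notMem hx]
  have hGint : Integrable G m := (((intg hv).congr hvv').pos_part).indicator hE
  have hGle : ∀ t : ℝ, 0 < t → ∫ x, G x ∂m ≤ C / (2 * t) := by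
    intro t ht
    have hae : ∀ᵐ x ∂m, G x ≤ t * max (t⁻¹ * v x - w x) 0 := by
      filter_upwards [hvv', hww'] with x hvx hwx
      by_cases hx : x ∈ E
      · rw [hGdef, Set.indicator_of_mem hx]
        have hwx0 : w x ≤ 0 := by rw [hwx]; exact hx
        have hmul : t * max (t⁻¹ * v x - w x) 0 = max (v x - t * w x) 0 := by
          rw [mul_max_of_nonneg _ _ (le_of_lt ht), mul_zero]
          congr 1
          field_simp
        rw [hmul, ← hvx]
        refine max_le_max ?_ le_rfl
        nlinarith
      · rw [hGdef, Set.indicator_of_notMem hx]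
        exact mul_nonneg (le_of_lt ht) (le_max_right _ _)
    have hint0 : Integrable (fun x => max (t⁻¹ * v x - w x) 0) m :=
      (((intg hv).const_mul t⁻¹).sub (intg hw)).pos_part
    calc ∫ x, G x ∂m ≤ ∫ x, t * max (t⁻¹ * v x - w x) 0 ∂m :=
          integral_mono_ae hGint (hint0.const_mul t) hae
      _ = t * ∫ x, max (t⁻¹ * v x - w x) 0 ∂m := integral_const_mul _ _
      _ ≤ t * (C / (2 * t ^ 2)) := by
          exact mul_le_mul_of_nonneg_left (stepB t ht) (le_of_lt ht)
      _ = C / (2 * t) := by field_simp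
  have hG0 : ∫ x, G x ∂m = 0 := by
    refine le_antisymm ?_ (integral_nonneg hGnn)
    by_contra hpos
    push_neg at hpos
    set I := ∫ x, G x ∂m with hIdef
    have hI : 0 < I := hpos
    set t : ℝ := C / (2 * I) + 1 with htdef
    have ht : 0 < t := by positivity
    have h1 := hGle t ht
    have h2 : C / (2 * t) < I := by
      rw [div_lt_iff₀ (by positivity)]
      have : I * (2 * t) = C + 2 * I := by
        rw [htdef]; field_simp
      rw [mul_comm I (2*t), mul_comm (2*t) I] at *
      rw [this]
      linarith
    linarith
  have hGae : G =ᵐ[m] 0 := by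
    rw [← integral_eq_zero_iff_of_nonneg hGnn hGint]
    exact hG0
  filter_upwards [hGae, hvv', hww'] with x hg hvx hwx hwle
  have hxE : x ∈ E := by rw [hEdef]; show w' x ≤ 0; rw [← hwx]; exact hwle
  have : max (v' x) 0 = 0 := by
    have := hg
    rwa [hGdef, Set.indicator_of_mem hxE] at this
  have hv'le : v' x ≤ 0 := by
    by_contra hcon
    push_neg at hcon
    rw [max_eq_left (le_of_lt hcon)] at this
    linarith
  rw [hvx]; exact hv'le

end Helpers3

section Helpers4
variable {X : Type*} [MeasurableSpace X] {m : Measure X} {S : Setting X m}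

theorem gram_schmidt [IsFiniteMeasure m] :
    ∀ (N : ℕ) (b : Fin N → X → ℝ), (∀ i, b i ∈ S.H) → LinearIndependent ℝ b →
    ∃ e : Fin N → X → ℝ,
      (∀ i, e i ∈ Submodule.span ℝ (Set.range b)) ∧
      LinearIndependent ℝ e ∧
      (∀ i j, i ≠ j → ∫ x, e i x * e j x ∂m = 0) ∧
      (∀ i, ∫ x, (e i x) ^ 2 ∂m = 0 ∨ ∫ x, (e i x) ^ 2 ∂m = 1) ∧
      (∀ i, e i ∈ S.H) := by
  intro N
  induction N with
  | zero =>
    intro b hb hLI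
    exact ⟨b, fun i => i.elim0, hLI, fun i => i.elim0, fun i => i.elim0, fun i => hb i⟩
  | succ N ih =>
    intro b hb hLI
    set bp : Fin N → X → ℝ := fun i => b i.castSucc with hbpdef
    have hbp : ∀ i, bp i ∈ S.H := fun i => hb _
    have hLIp : LinearIndependent ℝ bp := hLI.comp _ (Fin.castSucc_injective N)
    obtain ⟨e0, hspan0, hLI0, horth0, hnorm0, hH0⟩ := ih bp hbp hLIp
    have hL2e0 : ∀ i, MemLp (e0 i) 2 m := fun i => S.memL2 (hH0 i)
    have hL2bl : MemLp (b (Fin.last N)) 2 m := S.memL2 (hb _)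
    set α : Fin N → ℝ := fun i => ∫ x, b (Fin.last N) x * e0 i x ∂m with hαdef
    set r : X → ℝ := b (Fin.last N) - ∑ i, α i • e0 i with hrdef
    have hsum_eq : (∑ i, α i • e0 i : X → ℝ) = fun y => ∑ i, α i * e0 i y := by
      funext y; simp [Finset.sum_apply]
    have hrH : r ∈ S.H := by
      rw [hrdef, hsum_eq]
      exact memH_sub (hb _) (lc_mem hH0 α)
    have hrL2 : MemLp r 2 m := S.memL2 hrH
    have hrpt : ∀ y, r y = b (Fin.last N) y - ∑ i, α i * e0 i y := by
      intro y; rw [hrdef, hsum_eq]; simp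
    -- span facts
    have hspan_sub : Submodule.span ℝ (Set.range bp) ≤ Submodule.span ℝ (Set.range b) :=
      Submodule.span_mono (by rintro _ ⟨i, rfl⟩; exact ⟨i.castSucc, rfl⟩)
    have hrspan : r ∈ Submodule.span ℝ (Set.range b) := by
      rw [hrdef]
      exact Submodule.sub_mem _ (Submodule.subset_span ⟨Fin.last N, rfl⟩)
        (Submodule.sum_mem _ fun i _ => Submodule.smul_mem _ _ (hspan_sub (hspan0 i)))
    have hsnoc : (Fin.snoc bp (b (Fin.last N)) : Fin (N + 1) → X → ℝ) = b := by
      funext i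
      refine Fin.lastCases ?_ ?_ i
      · simp
      · intro j; simp [hbpdef]
    have hnotmem : b (Fin.last N) ∉ Submodule.span ℝ (Set.range bp) :=
      (linearIndependent_fin_snoc.mp (by rwa [hsnoc])).2
    have hspan_e0_bp : Submodule.span ℝ (Set.range e0) ≤ Submodule.span ℝ (Set.range bp) :=
      Submodule.span_le.mpr (by rintro _ ⟨i, rfl⟩; exact hspan0 i)
    have hrnot : r ∉ Submodule.span ℝ (Set.range e0) := by
      intro hmem
      have hb_eq : b (Fin.last N) = r + ∑ i, α i • e0 i := by
        rw [hrdef]; abel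
      exact hnotmem (hb_eq ▸ Submodule.add_mem _ (hspan_e0_bp hmem)
        (Submodule.sum_mem _ fun i _ => Submodule.smul_mem _ _ (hspan0 i)))
    -- orthogonality of r against e0
    have hrorth : ∀ i, ∫ x, r x * e0 i x ∂m = 0 := by
      intro i
      have hpt : (fun x => r x * e0 i x)
          = fun x => b (Fin.last N) x * e0 i x - ∑ l, α l * (e0 l x * e0 i x) := by
        funext x
        rw [hrpt x, sub_mul, Finset.sum_mul]
        congr 1
        exact Finset.sum_congr rfl fun l _ => by ring
      have hint1 : Integrable (fun x => b (Fin.last N) x * e0 i x) m :=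
        intg_mul hL2bl (hL2e0 i)
      have hint2 : ∀ l : Fin N, Integrable (fun x => α l * (e0 l x * e0 i x)) m :=
        fun l => (intg_mul (hL2e0 l) (hL2e0 i)).const_mul _
      have hcalc : ∫ x, r x * e0 i x ∂m
          = α i - ∑ l, α l * ∫ x, e0 l x * e0 i x ∂m := by
        rw [hpt, integral_sub hint1 (integrable_finset_sum _ fun l _ => hint2 l),
          integral_finset_sum _ fun l _ => hint2 l]
        congr 1
        exact Finset.sum_congr rfl fun l _ => integral_const_mul _ _
      rw [hcalc]
      have hsum : ∑ l, α l * ∫ x, e0 l x * e0 i x ∂m = α i * ∫ x, e0 i x * e0 i x ∂m := by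
        rw [Finset.sum_eq_single i]
        · intro l _ hl
          rw [horth0 l i hl, mul_zero]
        · intro h; exact absurd (Finset.mem_univ i) h
      rw [hsum]
      rcases hnorm0 i with h0 | h1
      · have hae : e0 i =ᵐ[m] fun _ => (0:ℝ) := ae_zero_of_sq_integral_zero (hL2e0 i) h0
        have hα : α i = 0 := by
          show ∫ x, b (Fin.last N) x * e0 i x ∂m = 0
          have : (fun x => b (Fin.last N) x * e0 i x) =ᵐ[m] fun _ => (0:ℝ) := by
            filter_upwards [hae] with x hx
            rw [hx]; ring
          rw [integral_congr_ae this, integral_zero]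
        rw [hα]; ring
      · have : ∫ x, e0 i x * e0 i x ∂m = 1 := by
          have : (fun x => e0 i x * e0 i x) = fun x => (e0 i x) ^ 2 := by
            funext x; ring
          rw [this, h1]
        rw [this]; ring
    set ρ : ℝ := ∫ x, (r x) ^ 2 ∂m with hρdef
    have hρ0 : 0 ≤ ρ := integral_nonneg fun x => sq_nonneg _
    set s : ℝ := if ρ = 0 then 1 else (Real.sqrt ρ)⁻¹ with hsdef
    have hs : s ≠ 0 := by
      rw [hsdef]
      split_ifs with h
      · norm_num
      · exact inv_ne_zero (Real.sqrt_ne_zero'.mpr (lt_of_le_of_ne hρ0 (Ne.symm h)))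
    set en : X → ℝ := s • r with hendef
    have henH : en ∈ S.H := S.smul_mem s hrH
    have hen_sq : ∫ x, (en x) ^ 2 ∂m = s ^ 2 * ρ := by
      have : (fun x => (en x) ^ 2) = fun x => s ^ 2 * (r x) ^ 2 := by
        funext x
        rw [hendef]; simp [mul_pow]
      rw [this, integral_const_mul, hρdef]
    have hen_norm : ∫ x, (en x) ^ 2 ∂m = 0 ∨ ∫ x, (en x) ^ 2 ∂m = 1 := by
      rw [hen_sq, hsdef]
      by_cases h : ρ = 0
      · left; rw [h]; ring
      · right
        rw [if_neg h]
        have hρpos : 0 < ρ := lt_of_le_of_ne hρ0 (Ne.symm h)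
        rw [inv_pow, Real.sq_sqrt hρ0]
        exact inv_mul_cancel₀ h
    have hen_orth : ∀ i, ∫ x, en x * e0 i x ∂m = 0 := by
      intro i
      have : (fun x => en x * e0 i x) = fun x => s * (r x * e0 i x) := by
        funext x; rw [hendef]; simp [mul_assoc]
      rw [this, integral_const_mul, hrorth i, mul_zero]
    have hen_not : en ∉ Submodule.span ℝ (Set.range e0) := by
      intro hmem
      apply hrnot
      have : r = s⁻¹ • en := by
        funext x
        rw [hendef]
        simp [Pi.smul_apply, smul_eq_mul]
        rw [inv_mul_cancel_left₀ hs]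
      rw [this]
      exact Submodule.smul_mem _ _ hmem
    set e : Fin (N + 1) → X → ℝ := Fin.snoc e0 en with hedef
    have heval_last : e (Fin.last N) = en := by rw [hedef]; simp
    have heval_cast : ∀ i : Fin N, e i.castSucc = e0 i := by
      intro i; rw [hedef]; simp
    refine ⟨e, ?_, ?_, ?_, ?_, ?_⟩
    · intro i
      refine Fin.lastCases ?_ ?_ i
      · rw [heval_last, hendef]
        exact Submodule.smul_mem _ _ hrspan
      · intro j; rw [heval_cast]
        exact hspan_sub (hspan_e0_bp (Submodule.subset_span ⟨j, rfl⟩))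
    · rw [hedef]
      exact linearIndependent_fin_snoc.mpr ⟨hLI0, hen_not⟩
    · have hmix : ∀ l : Fin N, ∫ x, e0 l x * en x ∂m = 0 := by
        intro l
        calc ∫ x, e0 l x * en x ∂m = ∫ x, en x * e0 l x ∂m := by
              congr 1; funext x; ring
          _ = 0 := hen_orth l
      intro i j
      refine Fin.lastCases (motive := fun i => i ≠ j → ∫ x, e i x * e j x ∂m = 0) ?_ ?_ i
      · refine Fin.lastCases
          (motive := fun j => Fin.last N ≠ j → ∫ x, e (Fin.last N) x * e j x ∂m = 0) ?_ ?_ j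
        · intro h; exact absurd rfl h
        · intro l _
          rw [heval_last, heval_cast]; exact hen_orth l
      · intro l
        refine Fin.lastCases
          (motive := fun j => l.castSucc ≠ j → ∫ x, e l.castSucc x * e j x ∂m = 0) ?_ ?_ j
        · intro _
          rw [heval_last, heval_cast]; exact hmix l
        · intro l' hne
          rw [heval_cast, heval_cast]
          refine horth0 l l' ?_
          intro h; exact hne (by rw [h])
    · intro i
      refine Fin.lastCases ?_ ?_ i
      · rw [heval_last]; exact hen_norm
      · intro j; rw [heval_cast]; exact hnorm0 j
    · intro i
      refine Fin.lastCases ?_ ?_ i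
      · rw [heval_last]; exact henH
      · intro j; rw [heval_cast]; exact hH0 j

end Helpers4

section Helpers5
variable {X : Type*} [MeasurableSpace X] {m : Measure X} {S : Setting X m}

theorem normHsq_neg {u : X → ℝ} (hu : u ∈ S.H) : normHsq S (-u) = normHsq S u := by
  have h : -u = (-1 : ℝ) • u := by funext y; simp
  have hD : S.D (-u) =ᵐ[m] S.D u := by
    filter_upwards [S.D3 (-1) hu] with x hx
    rw [← h] at hx
    rw [hx]; norm_num
  rw [normHsq, normHsq]
  congr 1
  · congr 1; funext x; simp
  · refine integral_congr_ae ?_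
    filter_upwards [hD] with x hx
    rw [hx]

end Helpers5

/-- `λ_k` is decreasing for set inclusion and lower semicontinuous
along weak-γ-convergent sequences of energy sets. -/
theorem statement_17 {X : Type*} [MeasurableSpace X] {m : Measure X} [IsFiniteMeasure m]
    (S : Setting X m) (hcpt : CompactEmbedding S) (hlsc : GradLSC S) (k : ℕ) :
    (∀ ω Ω : Set X, ω ⊆ Ω → lambdaK S Ω k ≤ lambdaK S ω k) ∧
    (∀ (Ω : ℕ → Set X), (∀ n, MeasurableSet (Ω n)) →
      ∀ (wn : ℕ → X → ℝ), (∀ n, IsMinimizer S (Ω n) 1 (fun _ => 1) (wn n)) →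
      (∀ n, m (Ω n \ {x | 0 < wn n x}) = 0) →
      ∀ w : X → ℝ, w ∈ S.H →
      Tendsto (fun n => ∫ x, (wn n x - w x) ^ 2 ∂m) atTop (nhds 0) →
      lambdaK S {x | 0 < w x} k ≤ liminf (fun n => lambdaK S (Ω n) k) atTop) := by
  constructor
  · intro ω Ω hsub
    apply sInf_le_sInf
    rintro r ⟨b, hb, hLI, rfl⟩
    exact ⟨b, fun i => ⟨(hb i).1,
      (hb i).2.mono fun x hx hΩx => hx fun hω => hΩx (hsub hω)⟩, hLI, rfl⟩
  · intro Ω hΩm wn hmin hnull w hwH hwc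
    classical
    refine ENNReal.le_of_forall_pos_le_add fun ε hε hLtop => ?_
    have hLε : liminf (fun n => lambdaK S (Ω n) k) atTop
        < liminf (fun n => lambdaK S (Ω n) k) atTop + (ε : ℝ≥0∞) :=
      ENNReal.lt_add_right hLtop.ne (by exact_mod_cast hε.ne')
    set Λ : ℝ≥0∞ := liminf (fun n => lambdaK S (Ω n) k) atTop + (ε : ℝ≥0∞) with hΛdef
    have hΛne : Λ ≠ ⊤ :=
      ENNReal.add_ne_top.mpr ⟨hLtop.ne, ENNReal.coe_ne_top⟩
    set B : ℝ := Λ.toReal with hBdef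
    have hB0 : 0 ≤ B := ENNReal.toReal_nonneg
    have hfreq : ∃ᶠ n in atTop, lambdaK S (Ω n) k < Λ :=
      frequently_lt_of_liminf_lt (h := hLε)
    obtain ⟨φ, hφmono, hφ⟩ := extraction_of_frequently_atTop hfreq
    -- step 1: near-optimal orthonormal-or-ghost families for each j
    have hex : ∀ j : ℕ, ∃ e : Fin k → X → ℝ,
        (∀ i, e i ∈ H0 S (Ω (φ j))) ∧ LinearIndependent ℝ e ∧
        (∀ i l, i ≠ l → ∫ x, e i x * e l x ∂m = 0) ∧
        (∀ i, ∫ x, (e i x) ^ 2 ∂m = 0 ∨ ∫ x, (e i x) ^ 2 ∂m = 1) ∧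
        (∀ c : Fin k → ℝ, (∫ x, (∑ i, c i * e i x) ^ 2 ∂m) = 1 →
          ∫ x, (S.D (fun y => ∑ i, c i * e i y) x) ^ 2 ∂m ≤ B) := by
      intro j
      have hj : lambdaK S (Ω (φ j)) k < Λ := hφ j
      rw [lambdaK, sInf_lt_iff] at hj
      obtain ⟨r, hrmem, hrΛ⟩ := hj
      obtain ⟨b, hbH0, hbLI, rfl⟩ := hrmem
      have hbound : ∀ c : Fin k → ℝ, (∫ x, (∑ i, c i * b i x) ^ 2 ∂m) = 1 →
          ∫ x, (S.D (fun y => ∑ i, c i * b i y) x) ^ 2 ∂m ≤ B := by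
        intro c hc
        have hmem : ENNReal.ofReal (∫ x, (S.D (fun y => ∑ i, c i * b i y) x) ^ 2 ∂m)
            ∈ {s : ℝ≥0∞ | ∃ c : Fin k → ℝ,
              (∫ x, (∑ i, c i * b i x) ^ 2 ∂m) = 1 ∧
              s = ENNReal.ofReal (∫ x, (S.D (fun y => ∑ i, c i * b i y) x) ^ 2 ∂m)} :=
          ⟨c, hc, rfl⟩
        have hlt := lt_of_le_of_lt (le_sSup hmem) hrΛ
        have hnn : 0 ≤ ∫ x, (S.D (fun y => ∑ i, c i * b i y) x) ^ 2 ∂m :=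
          integral_nonneg fun x => sq_nonneg _
        have := (ENNReal.toReal_le_toReal ENNReal.ofReal_ne_top hΛne).mpr hlt.le
        rwa [ENNReal.toReal_ofReal hnn] at this
      obtain ⟨e, hespan, heLI, heorth, henorm, heH⟩ :=
        gram_schmidt (S := S) k b (fun i => (hbH0 i).1) hbLI
      have heH0 : ∀ i, e i ∈ H0 S (Ω (φ j)) := by
        intro i
        obtain ⟨c, hcc⟩ := (Submodule.mem_span_range_iff_exists_fun ℝ).mp (hespan i)
        have hfu : e i = fun y => ∑ l, c l * b l y := by
          rw [← hcc]; funext y; simp [Finset.sum_apply]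
        rw [hfu]; exact lc_H0 hbH0 c
      refine ⟨e, heH0, heLI, heorth, henorm, ?_⟩
      intro c hc
      have hlcspan : (fun y => ∑ i, c i * e i y) ∈ Submodule.span ℝ (Set.range b) := by
        have hfu : (fun y => ∑ i, c i * e i y) = ∑ i, c i • e i := by
          funext y; simp [Finset.sum_apply]
        rw [hfu]
        exact Submodule.sum_mem _ fun i _ => Submodule.smul_mem _ _ (hespan i)
      obtain ⟨c', hc'⟩ := (Submodule.mem_span_range_iff_exists_fun ℝ).mp hlcspan
      have hfun : (fun y => ∑ i, c i * e i y) = fun y => ∑ l, c' l * b l y := by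
        rw [← hc']; funext y; simp [Finset.sum_apply]
      have hptw : ∀ x, (∑ i, c i * e i x) = ∑ l, c' l * b l x := fun x => congrFun hfun x
      have h1 : (∫ x, (∑ l, c' l * b l x) ^ 2 ∂m) = 1 := by
        calc ∫ x, (∑ l, c' l * b l x) ^ 2 ∂m = ∫ x, (∑ i, c i * e i x) ^ 2 ∂m := by
              congr 1; funext x; rw [hptw x]
          _ = 1 := hc
      have h2 := hbound c' h1
      rw [hfun]; exact h2
    choose E hEH0 hELI hEorth hEnorm hEb using hex
    have hEH : ∀ j i, E j i ∈ S.H := fun j i => (hEH0 j i).1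
    have hEsq1 : ∀ j i, ∫ x, (E j i x) ^ 2 ∂m ≤ 1 := by
      intro j i
      rcases hEnorm j i with h | h
      · rw [h]; norm_num
      · rw [h]
    have hED : ∀ j i, ∫ x, (S.D (E j i) x) ^ 2 ∂m ≤ B := by
      intro j i
      rcases hEnorm j i with h | h
      · have hae := ae_zero_of_sq_integral_zero (S.memL2 (hEH j i)) h
        have hD := D_ae_zero (hEH j i) hae
        have hz : ∫ x, (S.D (E j i) x) ^ 2 ∂m = 0 := by
          have haux : (fun x => (S.D (E j i) x) ^ 2) =ᵐ[m] fun _ => (0:ℝ) := by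
            filter_upwards [hD] with x hx; rw [hx]; ring
          rw [integral_congr_ae haux, integral_zero]
        rw [hz]; exact hB0
      · have hpt : ∀ x, (∑ i', (if i' = i then (1:ℝ) else 0) * E j i' x) = E j i x := by
          intro x
          rw [Finset.sum_eq_single i]
          · rw [if_pos rfl, one_mul]
          · intro l _ hl; rw [if_neg hl, zero_mul]
          · intro hcon; exact absurd (Finset.mem_univ i) hcon
        have hone : (∫ x, (∑ i', (if i' = i then (1:ℝ) else 0) * E j i' x) ^ 2 ∂m) = 1 := by
          calc ∫ x, (∑ i', (if i' = i then (1:ℝ) else 0) * E j i' x) ^ 2 ∂m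
              = ∫ x, (E j i x) ^ 2 ∂m := by congr 1; funext x; rw [hpt x]
            _ = 1 := h
        have hres := hEb j _ hone
        have hfun2 : (fun y => ∑ i', (if i' = i then (1:ℝ) else 0) * E j i' y) = E j i :=
          funext hpt
        rwa [hfun2] at hres
    have hnormb : ∀ j i, normHsq S (E j i) ≤ 1 + B := by
      intro j i
      rw [normHsq]
      exact add_le_add (hEsq1 j i) (hED j i)
    -- step 2: ghost pattern pigeonhole
    set gs : ℕ → Finset (Fin k) :=
      fun j => Finset.univ.filter (fun i => ∫ x, (E j i x) ^ 2 ∂m = 0) with hgsdef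
    obtain ⟨pat, hpatinf⟩ := Finite.exists_infinite_fiber gs
    have hfreq2 : ∃ᶠ j in atTop, gs j = pat := by
      rw [Nat.frequently_atTop_iff_infinite]
      rw [Set.infinite_coe_iff] at hpatinf
      exact hpatinf
    obtain ⟨ψ, hψmono, hψ⟩ := extraction_of_frequently_atTop hfreq2
    -- step 3: compact extraction of limits for every index
    have hext : ∀ T : Finset (Fin k), ∃ σ : ℕ → ℕ, StrictMono σ ∧ ∃ v : Fin k → X → ℝ,
        ∀ i ∈ T, v i ∈ S.H ∧
          Tendsto (fun t => ∫ x, (E (ψ (σ t)) i x - v i x) ^ 2 ∂m) atTop (nhds 0) := by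
      intro T
      induction T using Finset.induction_on with
      | empty =>
        exact ⟨id, strictMono_id, fun _ => fun _ => 0,
          fun i hi => absurd hi (Finset.notMem_empty i)⟩
      | @insert a T ha ih =>
        obtain ⟨σ, hσ, v, hv⟩ := ih
        obtain ⟨σ', va, hσ', hvaH, hconv⟩ := hcpt (fun t => E (ψ (σ t)) a)
          (fun t => hEH _ _) ⟨1 + B, fun t => hnormb _ _⟩
        refine ⟨σ ∘ σ', hσ.comp hσ', Function.update v a va, ?_⟩
        intro i hi
        rcases Finset.mem_insert.mp hi with rfl | hiT
        · rw [Function.update_self]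
          exact ⟨hvaH, hconv⟩
        · rw [Function.update_of_ne (by rintro rfl; exact ha hiT) _ _]
          obtain ⟨h1, h2⟩ := hv i hiT
          exact ⟨h1, h2.comp hσ'.tendsto_atTop⟩
    obtain ⟨σ, hσmono, v, hvprop⟩ := hext Finset.univ
    have hvH : ∀ i, v i ∈ S.H := fun i => (hvprop i (Finset.mem_univ i)).1
    have hvconv : ∀ i,
        Tendsto (fun t => ∫ x, (E (ψ (σ t)) i x - v i x) ^ 2 ∂m) atTop (nhds 0) :=
      fun i => (hvprop i (Finset.mem_univ i)).2
    set τ : ℕ → ℕ := fun t => ψ (σ t) with hτdef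
    have hτpat : ∀ t, gs (τ t) = pat := fun t => hψ (σ t)
    have hτmono : StrictMono (fun t => φ (τ t)) := hφmono.comp (hψmono.comp hσmono)
    have hghost : ∀ t i, i ∈ pat ↔ ∫ x, (E (τ t) i x) ^ 2 ∂m = 0 := by
      intro t i
      conv_lhs => rw [← hτpat t]
      rw [hgsdef]
      simp [Finset.mem_filter]
    -- gram matrix limits
    have hgram : ∀ i l, i ∉ pat → l ∉ pat →
        ∫ x, v i x * v l x ∂m = (if i = l then (1:ℝ) else 0) := by
      intro i l hi hl
      have hconst : ∀ t, ∫ x, E (τ t) i x * E (τ t) l x ∂m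
          = (if i = l then (1:ℝ) else 0) := by
        intro t
        by_cases h : i = l
        · subst h
          rw [if_pos rfl]
          rcases hEnorm (τ t) i with h0 | h1
          · exact absurd ((hghost t i).mpr h0) hi
          · calc ∫ x, E (τ t) i x * E (τ t) i x ∂m
                = ∫ x, (E (τ t) i x) ^ 2 ∂m := by congr 1; funext x; ring
              _ = 1 := h1
        · rw [if_neg h]; exact hEorth (τ t) i l h
      have hlim : Tendsto (fun t => ∫ x, E (τ t) i x * E (τ t) l x ∂m) atTop
          (nhds (∫ x, v i x * v l x ∂m)) :=
        tendsto_int_mul (M := 1) (fun t => S.memL2 (hEH _ _)) (fun t => S.memL2 (hEH _ _))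
          (S.memL2 (hvH i)) (S.memL2 (hvH l)) (fun t => hEsq1 _ _) (hvconv i) (hvconv l)
      have hlim2 : Tendsto (fun t => ∫ x, E (τ t) i x * E (τ t) l x ∂m) atTop
          (nhds (if i = l then (1:ℝ) else 0)) := by
        rw [show (fun t => ∫ x, E (τ t) i x * E (τ t) l x ∂m)
          = fun _ => (if i = l then (1:ℝ) else 0) from funext hconst]
        exact tendsto_const_nhds
      exact tendsto_nhds_unique hlim hlim2
    have hghost0 : ∀ i, i ∈ pat → E (τ 0) i =ᵐ[m] fun _ => (0:ℝ) :=
      fun i hi => ae_zero_of_sq_integral_zero (S.memL2 (hEH _ _)) ((hghost 0 i).mp hi)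
    -- limits vanish outside {w > 0}
    have hvH0 : ∀ i, ∀ᵐ x ∂m, x ∉ {x | 0 < w x} → v i x = 0 := by
      intro i
      have hwL2 : MemLp w 2 m := S.memL2 hwH
      have hwcτ : Tendsto (fun t => ∫ x, (wn (φ (τ t)) x - w x) ^ 2 ∂m) atTop (nhds 0) :=
        hwc.comp hτmono.tendsto_atTop
      have hpos := vanish_limit (S := S) (Ωn := fun t => Ω (φ (τ t)))
        (wn := fun t => wn (φ (τ t))) (fun t => hmin _) hwL2 hwcτ
        (un := fun t => E (τ t) i) (fun t => hEH0 _ _) (C := 1 + B)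
        (fun t => hnormb _ _) (S.memL2 (hvH i)) (hvconv i)
      have hnegH0 : ∀ t, -(E (τ t) i) ∈ H0 S (Ω (φ (τ t))) := by
        intro t
        refine ⟨memH_neg (hEH _ _), ?_⟩
        filter_upwards [(hEH0 (τ t) i).2] with x hx hΩx
        rw [Pi.neg_apply, hx hΩx, neg_zero]
      have hnegconv : Tendsto (fun t => ∫ x, ((-(E (τ t) i)) x - (-(v i)) x) ^ 2 ∂m)
          atTop (nhds 0) := by
        have hfe : (fun t => ∫ x, ((-(E (τ t) i)) x - (-(v i)) x) ^ 2 ∂m)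
            = fun t => ∫ x, (E (τ t) i x - v i x) ^ 2 ∂m := by
          funext t; congr 1; funext x
          simp only [Pi.neg_apply]; ring
        rw [hfe]; exact hvconv i
      have hneg := vanish_limit (S := S) (Ωn := fun t => Ω (φ (τ t)))
        (wn := fun t => wn (φ (τ t))) (fun t => hmin _) hwL2 hwcτ
        (un := fun t => -(E (τ t) i)) hnegH0 (C := 1 + B)
        (fun t => by rw [normHsq_neg (hEH _ _)]; exact hnormb _ _)
        ((S.memL2 (hvH i)).neg) hnegconv
      filter_upwards [hpos, hneg] with x h1 h2 hx
      have hw0 : w x ≤ 0 := not_lt.mp hx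
      have ha := h1 hw0
      have hb := h2 hw0
      rw [Pi.neg_apply] at hb
      linarith
    -- final limit family
    set vfin : Fin k → X → ℝ := fun i => if i ∈ pat then E (τ 0) i else v i with hvfdef
    have hvfH : ∀ i, vfin i ∈ S.H := by
      intro i
      by_cases h : i ∈ pat <;> simp only [hvfdef, h, if_pos, if_neg, if_true, if_false]
      · exact hEH _ _
      · exact hvH i
    have hvfH0 : ∀ i, vfin i ∈ H0 S {x | 0 < w x} := by
      intro i
      by_cases h : i ∈ pat
      · refine ⟨hvfH i, ?_⟩
        filter_upwards [hghost0 i h] with x hx _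
        simp only [hvfdef, h, if_true]
        exact hx
      · refine ⟨hvfH i, ?_⟩
        filter_upwards [hvH0 i] with x hx hΩx
        simp only [hvfdef, h, if_false]
        exact hx hΩx
    -- a.e. ghost vanishing
    have hgae : ∀ᵐ x ∂m, ∀ i, i ∈ pat → E (τ 0) i x = 0 := by
      rw [ae_all_iff]
      intro i
      by_cases h : i ∈ pat
      · filter_upwards [hghost0 i h] with x hx _; exact hx
      · filter_upwards with x hi; exact absurd hi h
    -- linear independence of the limit family
    have hvfLI : LinearIndependent ℝ vfin := by
      rw [Fintype.linearIndependent_iff]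
      intro c hc
      set cg : Fin k → ℝ := fun i => if i ∈ pat then c i else 0 with hcgdef
      set cnn : Fin k → ℝ := fun i => if i ∈ pat then 0 else c i with hcnndef
      have hsplit : ∀ x, ∑ i, c i * vfin i x
          = (∑ i, cg i * E (τ 0) i x) + ∑ i, cnn i * v i x := by
        intro x
        rw [← Finset.sum_add_distrib]
        refine Finset.sum_congr rfl fun i _ => ?_
        by_cases h : i ∈ pat
        · simp only [hvfdef, hcgdef, hcnndef, h, if_true]
          ring
        · simp only [hvfdef, hcgdef, hcnndef, h, if_false]
          ring
      have hzero : ∀ x, ∑ i, c i * vfin i x = 0 := by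
        intro x
        have := congrFun hc x
        simpa [Finset.sum_apply] using this
      have haez : (fun x => ∑ i, cnn i * v i x) =ᵐ[m] fun _ => (0:ℝ) := by
        filter_upwards [hgae] with x hx
        have h0 : ∑ i, cg i * E (τ 0) i x = 0 := by
          refine Finset.sum_eq_zero fun i _ => ?_
          by_cases h : i ∈ pat
          · rw [hx i h, mul_zero]
          · simp only [hcgdef, h, if_false]; ring
        have h1 := hzero x
        rw [hsplit x, h0, zero_add] at h1
        exact h1
      have hsq0 : ∫ x, (∑ i, cnn i * v i x) ^ 2 ∂m = 0 := by
        have haux : (fun x => (∑ i, cnn i * v i x) ^ 2) =ᵐ[m] fun _ => (0:ℝ) := by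
          filter_upwards [haez] with x hx
          rw [hx]; ring
        rw [integral_congr_ae haux, integral_zero]
      have hoff : ∀ i l, i ≠ l → cnn i ≠ 0 → cnn l ≠ 0 →
          (∫ x, v i x * v l x ∂m) = 0 := by
        intro i l hil hi hl
        have hi' : i ∉ pat := fun h => hi (by simp [hcnndef, h])
        have hl' : l ∉ pat := fun h => hl (by simp [hcnndef, h])
        rw [hgram i l hi' hl', if_neg hil]
      have hdiag : ∀ i, cnn i ≠ 0 → (∫ x, v i x * v i x ∂m) = 1 := by
        intro i hi
        have hi' : i ∉ pat := fun h => hi (by simp [hcnndef, h])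
        rw [hgram i i hi' hi', if_pos rfl]
      have hsum0 : ∑ i, (cnn i) ^ 2 = 0 := by
        rw [← sum_mul_orth hoff hdiag, ← integral_lc_sq (fun i => S.memL2 (hvH i)) cnn, hsq0]
      have hcnn0 : ∀ i, cnn i = 0 := by
        intro i
        have := (Finset.sum_eq_zero_iff_of_nonneg
          (fun i _ => sq_nonneg (cnn i))).mp hsum0 i (Finset.mem_univ i)
        exact pow_eq_zero_iff (n := 2) (by norm_num) |>.mp this
      have hcnotpat : ∀ i, i ∉ pat → c i = 0 := by
        intro i h
        have := hcnn0 i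
        simpa [hcnndef, h] using this
      have hEg : ∑ i, cg i • E (τ 0) i = (0 : X → ℝ) := by
        funext x
        have h2 : ∑ i, cnn i * v i x = 0 :=
          Finset.sum_eq_zero fun i _ => by rw [hcnn0 i, zero_mul]
        have h1 := hzero x
        rw [hsplit x, h2, add_zero] at h1
        simpa [Finset.sum_apply] using h1
      have hcg0 := Fintype.linearIndependent_iff.mp (hELI (τ 0)) cg hEg
      intro i
      by_cases h : i ∈ pat
      · have := hcg0 i
        simpa [hcgdef, h] using this
      · exact hcnotpat i h
    -- the Rayleigh bound for the limit family
    have hle2 : sSup {s : ℝ≥0∞ | ∃ c : Fin k → ℝ,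
        (∫ x, (∑ i, c i * vfin i x) ^ 2 ∂m) = 1 ∧
        s = ENNReal.ofReal (∫ x, (S.D (fun y => ∑ i, c i * vfin i y) x) ^ 2 ∂m)} ≤ Λ := by
      apply sSup_le
      rintro s ⟨c, hc1, rfl⟩
      set cn : Fin k → ℝ := fun i => if i ∈ pat then 0 else c i with hcndef
      have hae_uu' : (fun x => ∑ i, c i * vfin i x) =ᵐ[m] fun x => ∑ i, cn i * v i x := by
        filter_upwards [hgae] with x hx
        refine Finset.sum_congr rfl fun i _ => ?_
        by_cases h : i ∈ pat
        · simp only [hvfdef, hcndef, h, if_true]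
          rw [hx i h]; ring
        · simp only [hvfdef, hcndef, h, if_false]
      have hu'1 : ∫ x, (∑ i, cn i * v i x) ^ 2 ∂m = 1 := by
        calc ∫ x, (∑ i, cn i * v i x) ^ 2 ∂m
            = ∫ x, (∑ i, c i * vfin i x) ^ 2 ∂m := by
              refine integral_congr_ae ?_
              filter_upwards [hae_uu'] with x hx
              rw [hx]
          _ = 1 := hc1
      have hoff : ∀ i l, i ≠ l → cn i ≠ 0 → cn l ≠ 0 →
          (∫ x, v i x * v l x ∂m) = 0 := by
        intro i l hil hi hl
        have hi' : i ∉ pat := fun h => hi (by simp [hcndef, h])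
        have hl' : l ∉ pat := fun h => hl (by simp [hcndef, h])
        rw [hgram i l hi' hl', if_neg hil]
      have hdiag : ∀ i, cn i ≠ 0 → (∫ x, v i x * v i x ∂m) = 1 := by
        intro i hi
        have hi' : i ∉ pat := fun h => hi (by simp [hcndef, h])
        rw [hgram i i hi' hi', if_pos rfl]
      have hsumsq : ∑ i, (cn i) ^ 2 = 1 := by
        rw [← sum_mul_orth hoff hdiag, ← integral_lc_sq (fun i => S.memL2 (hvH i)) cn, hu'1]
      -- the approximating sequence
      have hst_sq : ∀ t, ∫ x, (∑ i, cn i * E (τ t) i x) ^ 2 ∂m = 1 := by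
        intro t
        have hoff' : ∀ i l, i ≠ l → cn i ≠ 0 → cn l ≠ 0 →
            (∫ x, E (τ t) i x * E (τ t) l x ∂m) = 0 :=
          fun i l h _ _ => hEorth (τ t) i l h
        have hdiag' : ∀ i, cn i ≠ 0 → (∫ x, E (τ t) i x * E (τ t) i x ∂m) = 1 := by
          intro i hi
          have hi' : i ∉ pat := fun h => hi (by simp [hcndef, h])
          rcases hEnorm (τ t) i with h0 | h1
          · exact absurd ((hghost t i).mpr h0) hi'
          · calc ∫ x, E (τ t) i x * E (τ t) i x ∂m
                = ∫ x, (E (τ t) i x) ^ 2 ∂m := by congr 1; funext x; ring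
              _ = 1 := h1
        rw [integral_lc_sq (fun i => S.memL2 (hEH _ _)) cn, sum_mul_orth hoff' hdiag', hsumsq]
      have hst_energy : ∀ t,
          ∫ x, (S.D (fun y => ∑ i, cn i * E (τ t) i y) x) ^ 2 ∂m ≤ B :=
        fun t => hEb (τ t) cn (hst_sq t)
      have hst_conv : Tendsto
          (fun t => ∫ x, ((∑ i, cn i * E (τ t) i x) - ∑ i, cn i * v i x) ^ 2 ∂m)
          atTop (nhds 0) := by
        have hrw : (fun t => ∫ x, ((∑ i, cn i * E (τ t) i x) - ∑ i, cn i * v i x) ^ 2 ∂m)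
            = fun t => ∑ i, ∑ l, cn i * cn l *
                ∫ x, (E (τ t) i x - v i x) * (E (τ t) l x - v l x) ∂m := by
          funext t
          have hpt : ∀ x, ((∑ i, cn i * E (τ t) i x) - ∑ i, cn i * v i x)
              = ∑ i, cn i * (E (τ t) i x - v i x) := by
            intro x
            rw [← Finset.sum_sub_distrib]
            exact Finset.sum_congr rfl fun i _ => by ring
          calc ∫ x, ((∑ i, cn i * E (τ t) i x) - ∑ i, cn i * v i x) ^ 2 ∂m
              = ∫ x, (∑ i, cn i * (E (τ t) i x - v i x)) ^ 2 ∂m := by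
                congr 1; funext x; rw [hpt x]
            _ = ∑ i, ∑ l, cn i * cn l *
                ∫ x, (E (τ t) i x - v i x) * (E (τ t) l x - v l x) ∂m :=
                integral_lc_sq (fun i => (S.memL2 (hEH _ _)).sub (S.memL2 (hvH i))) cn
        rw [hrw]
        have hterm : ∀ i l : Fin k, Tendsto (fun t => cn i * cn l *
            ∫ x, (E (τ t) i x - v i x) * (E (τ t) l x - v l x) ∂m) atTop (nhds 0) := by
          intro i l
          have := (tendsto_int_mul_zero
            (f := fun t => fun x => E (τ t) i x - v i x)
            (g := fun t => fun x => E (τ t) l x - v l x)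
            (fun t => (S.memL2 (hEH _ _)).sub (S.memL2 (hvH i)))
            (fun t => (S.memL2 (hEH _ _)).sub (S.memL2 (hvH l)))
            (hvconv i) (hvconv l)).const_mul (cn i * cn l)
          simpa using this
        have := tendsto_finset_sum (Finset.univ : Finset (Fin k))
          (fun i _ => tendsto_finset_sum (Finset.univ : Finset (Fin k))
            (fun l _ => hterm i l))
        simpa using this
      have hstH : ∀ t, (fun y => ∑ i, cn i * E (τ t) i y) ∈ S.H :=
        fun t => lc_mem (fun i => hEH _ _) cn
      have hstnorm : ∀ t, normHsq S (fun y => ∑ i, cn i * E (τ t) i y) ≤ 1 + B := by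
        intro t
        rw [normHsq]
        exact add_le_add (le_of_eq (hst_sq t)) (hst_energy t)
      obtain ⟨hu'H, hu'lsc⟩ := hlsc (fun t => fun y => ∑ i, cn i * E (τ t) i y)
        (fun y => ∑ i, cn i * v i y) hstH ⟨1 + B, hstnorm⟩ hst_conv
      have hbdd : Filter.IsBoundedUnder (· ≥ ·) atTop
          (fun t => ∫ x, (S.D (fun y => ∑ i, cn i * E (τ t) i y) x) ^ 2 ∂m) :=
        ⟨0, Filter.eventually_map.mpr (Filter.Eventually.of_forall
          fun t => integral_nonneg fun x => sq_nonneg _)⟩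
      have hliminf : liminf
          (fun t => ∫ x, (S.D (fun y => ∑ i, cn i * E (τ t) i y) x) ^ 2 ∂m) atTop ≤ B :=
        liminf_le_of_frequently_le (Filter.Frequently.of_forall hst_energy) hbdd
      have hDu' : ∫ x, (S.D (fun y => ∑ i, cn i * v i y) x) ^ 2 ∂m ≤ B :=
        le_trans hu'lsc hliminf
      have huH : (fun y => ∑ i, c i * vfin i y) ∈ S.H := lc_mem hvfH c
      have hDcongr := D_congr_ae huH hu'H hae_uu'
      have hDu : ∫ x, (S.D (fun y => ∑ i, c i * vfin i y) x) ^ 2 ∂m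
          = ∫ x, (S.D (fun y => ∑ i, cn i * v i y) x) ^ 2 ∂m := by
        refine integral_congr_ae ?_
        filter_upwards [hDcongr] with x hx
        rw [hx]
      calc ENNReal.ofReal (∫ x, (S.D (fun y => ∑ i, c i * vfin i y) x) ^ 2 ∂m)
          ≤ ENNReal.ofReal B := by
            rw [hDu]; exact ENNReal.ofReal_le_ofReal hDu'
        _ ≤ Λ := by rw [hBdef]; exact ENNReal.ofReal_toReal_le
    have hle1 : lambdaK S {x | 0 < w x} k ≤ sSup {s : ℝ≥0∞ | ∃ c : Fin k → ℝ,
        (∫ x, (∑ i, c i * vfin i x) ^ 2 ∂m) = 1 ∧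
        s = ENNReal.ofReal (∫ x, (S.D (fun y => ∑ i, c i * vfin i y) x) ^ 2 ∂m)} := by
      rw [lambdaK]
      exact sInf_le ⟨vfin, hvfH0, hvfLI, rfl⟩
    exact le_trans hle1 hle2

end AbsSob
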